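/- Let ε₀ > 0 and V ∈ L^∞(ℝ) with support contained in [−ε₀, ε₀]. For every f ∈ L²(ℝ), for almost every t ∈ ℝ the function s ↦ (i/2) u(t) sign(t−s) v(s) f(s) is integrable, the function 𝒦_V f(t) := (i/2) ∫_ℝ u(t) sign(t−s) v(s) f(s) ds belongs to L²(ℝ), and ‖𝒦_V f‖_{L²(ℝ)} ≤ (1/2) ‖V‖_{L¹(ℝ)} ‖f‖_{L²(ℝ)}; thus 𝒦_V is a bounded operator on L²(ℝ) of operator norm at most (1/2)‖V‖_{L¹(ℝ)}. -/

import Mathlib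

open MeasureTheory

/-- `u(t) = |ε₀ V(ε₀ t)|^{1/2}`. -/
noncomputable def uProfile (ε₀ : ℝ) (V : ℝ → ℝ) (t : ℝ) : ℝ :=
  Real.sqrt |ε₀ * V (ε₀ * t)|

/-- `v(t) = sign(V(ε₀ t)) u(t)`. -/
noncomputable def vProfile (ε₀ : ℝ) (V : ℝ → ℝ) (t : ℝ) : ℝ :=
  Real.sign (V (ε₀ * t)) * uProfile ε₀ V t

/-- The integral kernel `k(t,s) = (i/2) u(t) sign(t-s) v(s)` of the operator `𝒦_V`. -/
noncomputable def kerKV (ε₀ : ℝ) (V : ℝ → ℝ) (t s : ℝ) : ℂ :=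
  (Complex.I / 2) * (uProfile ε₀ V t : ℝ) * (Real.sign (t - s) : ℝ) * (vProfile ε₀ V s : ℝ)

/-- The integral operator `𝒦_V f(t) = (i/2) ∫ u(t) sign(t-s) v(s) f(s) ds`. -/
noncomputable def opKV (ε₀ : ℝ) (V : ℝ → ℝ) (f : ℝ → ℂ) (t : ℝ) : ℂ :=
  ∫ s, kerKV ε₀ V t s * f s

lemma abs_real_sign_le (x : ℝ) : |Real.sign x| ≤ 1 := by
  rcases lt_trichotomy x 0 with h | h | h
  · rw [Real.sign_of_neg h]; norm_num
  · simp [h]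
  · rw [Real.sign_of_pos h]; norm_num

lemma measurable_real_sign : Measurable Real.sign := by
  have : Real.sign = fun r : ℝ => if r < 0 then (-1 : ℝ) else if 0 < r then 1 else 0 := rfl
  rw [this]
  exact Measurable.ite (measurableSet_lt measurable_id measurable_const) measurable_const
    (Measurable.ite (measurableSet_lt measurable_const measurable_id) measurable_const
      measurable_const)

lemma measurable_uProfile (ε₀ : ℝ) {V : ℝ → ℝ} (hVm : Measurable V) :
    Measurable (uProfile ε₀ V) :=
  Real.continuous_sqrt.measurable.comp
    ((measurable_const.mul (hVm.comp (measurable_const_mul ε₀))).abs)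

lemma measurable_vProfile (ε₀ : ℝ) {V : ℝ → ℝ} (hVm : Measurable V) :
    Measurable (vProfile ε₀ V) :=
  (measurable_real_sign.comp (hVm.comp (measurable_const_mul ε₀))).mul
    (measurable_uProfile ε₀ hVm)

lemma opKV_bounded_aux (ε₀ : ℝ) (hε₀ : 0 < ε₀) (V : ℝ → ℝ)
    (hVm : Measurable V) (hVint : Integrable V (volume : Measure ℝ))
    (f : ℝ → ℂ) (hfm : StronglyMeasurable f) (hf : MemLp f 2 (volume : Measure ℝ)) :
    (∀ t, Integrable (fun s => kerKV ε₀ V t s * f s) volume) ∧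
    MemLp (opKV ε₀ V f) 2 (volume : Measure ℝ) ∧
    eLpNorm (opKV ε₀ V f) 2 (volume : Measure ℝ) ≤
      ENNReal.ofReal ((1 / 2) * ∫ t, |V t|) * eLpNorm f 2 (volume : Measure ℝ) := by
  set U := uProfile ε₀ V with hUdef
  have hUm : Measurable U := measurable_uProfile ε₀ hVm
  have hvm : Measurable (vProfile ε₀ V) := measurable_vProfile ε₀ hVm
  have hUnn : ∀ t, 0 ≤ U t := fun t => Real.sqrt_nonneg _
  have hUsq : ∀ t, U t ^ 2 = |ε₀ * V (ε₀ * t)| := fun t => Real.sq_sqrt (abs_nonneg _)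
  have hU2 : Integrable (fun t => U t ^ 2) volume := by
    simp_rw [hUsq, abs_mul]
    exact (hVint.abs.comp_mul_left' hε₀.ne').const_mul |ε₀|
  have hUmem : MemLp U 2 (volume : Measure ℝ) :=
    (memLp_two_iff_integrable_sq hUm.aestronglyMeasurable).2 hU2
  have hA : (∫ t, U t ^ 2) = ∫ t, |V t| := by
    simp_rw [hUsq, abs_mul]
    rw [integral_const_mul, Measure.integral_comp_mul_left (fun y => |V y|) ε₀]
    rw [smul_eq_mul, ← mul_assoc, abs_inv, mul_inv_cancel₀ (abs_ne_zero.2 hε₀.ne'), one_mul]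
  have hvle : ∀ s, |vProfile ε₀ V s| ≤ U s := by
    intro s
    rw [vProfile, abs_mul, abs_of_nonneg (hUnn s)]
    have h1 := abs_real_sign_le (V (ε₀ * s))
    have h2 := abs_nonneg (Real.sign (V (ε₀ * s)))
    nlinarith [hUnn s]
  have hker : ∀ t s, ‖kerKV ε₀ V t s * f s‖ ≤ (1 / 2 * U t) * (U s * ‖f s‖) := by
    intro t s
    have hnorm : ‖kerKV ε₀ V t s * f s‖
        = 1 / 2 * |U t| * |Real.sign (t - s)| * |vProfile ε₀ V s| * ‖f s‖ := by
      simp [kerKV, norm_mul, norm_div, Complex.norm_real, Real.norm_eq_abs, Complex.norm_I,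
        Complex.norm_ofNat, hUdef]
    rw [hnorm, abs_of_nonneg (hUnn t)]
    have h1 := abs_real_sign_le (t - s)
    have h2 := hvle s
    have h3 := abs_nonneg (Real.sign (t - s))
    have h4 := abs_nonneg (vProfile ε₀ V s)
    have h5 := norm_nonneg (f s)
    have hsv : |Real.sign (t - s)| * |vProfile ε₀ V s| ≤ U s := by nlinarith
    have h0 : (0 : ℝ) ≤ 1 / 2 * U t := by nlinarith [hUnn t]
    calc 1 / 2 * U t * |Real.sign (t - s)| * |vProfile ε₀ V s| * ‖f s‖
        = (1 / 2 * U t) * (|Real.sign (t - s)| * |vProfile ε₀ V s|) * ‖f s‖ := by ring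
      _ ≤ (1 / 2 * U t) * U s * ‖f s‖ :=
          mul_le_mul_of_nonneg_right (mul_le_mul_of_nonneg_left hsv h0) h5
      _ = 1 / 2 * U t * (U s * ‖f s‖) := by ring
  set g := fun s => U s * ‖f s‖ with hgdef
  have hgnn : ∀ s, 0 ≤ g s := fun s => mul_nonneg (hUnn s) (norm_nonneg _)
  have hg : Integrable g volume := by
    refine Integrable.mono' ((hU2.add hf.norm.integrable_sq).const_mul (1 / 2))
      ((hUm.mul hfm.measurable.norm).aestronglyMeasurable)
      (Filter.Eventually.of_forall fun s => ?_)
    rw [Real.norm_eq_abs, abs_of_nonneg (hgnn s)]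
    simp only [hgdef, Pi.add_apply]
    have := norm_nonneg (f s)
    nlinarith [sq_nonneg (U s - ‖f s‖), hUnn s]
  have hInt : ∀ t, Integrable (fun s => kerKV ε₀ V t s * f s) volume := by
    intro t
    refine Integrable.mono' (hg.const_mul (1 / 2 * U t)) ?_
      (Filter.Eventually.of_forall fun s => hker t s)
    have hmker : Measurable fun s => kerKV ε₀ V t s :=
      ((measurable_const.mul
          (Complex.measurable_ofReal.comp (measurable_real_sign.comp
            (measurable_const.sub measurable_id)))).mul
        (Complex.measurable_ofReal.comp hvm))
    exact (hmker.mul hfm.measurable).aestronglyMeasurable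
  set C := 1 / 2 * ∫ s, g s with hCdef
  have hCnn : 0 ≤ C := mul_nonneg (by norm_num) (integral_nonneg hgnn)
  have hopbound : ∀ t, ‖opKV ε₀ V f t‖ ≤ C * U t := by
    intro t
    have h1 : ‖∫ s, kerKV ε₀ V t s * f s‖ ≤ ∫ s, (1 / 2 * U t) * g s :=
      norm_integral_le_of_norm_le (hg.const_mul _)
        (Filter.Eventually.of_forall fun s => hker t s)
    rw [integral_const_mul] at h1
    calc ‖opKV ε₀ V f t‖ ≤ 1 / 2 * U t * ∫ s, g s := h1
      _ = C * U t := by rw [hCdef]; ring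
  have hopm : AEStronglyMeasurable (opKV ε₀ V f) volume := by
    have hF : StronglyMeasurable fun p : ℝ × ℝ => kerKV ε₀ V p.1 p.2 * f p.2 := by
      apply Measurable.stronglyMeasurable
      exact (((measurable_const.mul
            (Complex.measurable_ofReal.comp (hUm.comp measurable_fst))).mul
          (Complex.measurable_ofReal.comp (measurable_real_sign.comp
            (measurable_fst.sub measurable_snd)))).mul
        (Complex.measurable_ofReal.comp (hvm.comp measurable_snd))).mul
        (hfm.measurable.comp measurable_snd)
    have hsm := hF.integral_prod_right' (ν := (volume : Measure ℝ))
    have : StronglyMeasurable (opKV ε₀ V f) := by unfold opKV; exact hsm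
    exact this.aestronglyMeasurable
  have hCU : MemLp (fun t => C * U t) 2 (volume : Measure ℝ) := hUmem.const_mul C
  have hmem : MemLp (opKV ε₀ V f) 2 (volume : Measure ℝ) := by
    refine hCU.of_le hopm (Filter.Eventually.of_forall fun t => ?_)
    rw [Real.norm_eq_abs, abs_of_nonneg (mul_nonneg hCnn (hUnn t))]
    exact hopbound t
  refine ⟨hInt, hmem, ?_⟩
  -- Now the norm estimate.
  set A := ∫ t, U t ^ 2 with hAdef
  have hAnn : 0 ≤ A := integral_nonneg fun t => sq_nonneg _
  set B := ∫ t, ‖f t‖ ^ 2 with hBdef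
  have hBnn : 0 ≤ B := integral_nonneg fun t => sq_nonneg _
  have htoReal : (2 : ENNReal).toReal = (2 : ℝ) := by norm_num
  have hA' : (∫ a, ‖U a‖ ^ (2 : ℝ)) = A := by
    rw [hAdef]
    refine integral_congr_ae (Filter.Eventually.of_forall fun t => ?_)
    show ‖U t‖ ^ (2 : ℝ) = U t ^ 2
    rw [Real.norm_eq_abs, abs_of_nonneg (hUnn t), ← Real.rpow_natCast (U t) 2]
    norm_num
  have hB' : (∫ a, ‖f a‖ ^ (2 : ℝ)) = B := by
    rw [hBdef]
    refine integral_congr_ae (Filter.Eventually.of_forall fun t => ?_)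
    show ‖f t‖ ^ (2 : ℝ) = ‖f t‖ ^ (2 : ℕ)
    rw [← Real.rpow_natCast (‖f t‖) 2]
    norm_num
  have hULp : eLpNorm U 2 (volume : Measure ℝ) = ENNReal.ofReal (Real.sqrt A) := by
    rw [hUmem.eLpNorm_eq_integral_rpow_norm two_ne_zero ENNReal.ofNat_ne_top, htoReal]
    congr 1
    rw [hA', Real.sqrt_eq_rpow]
    norm_num
  have hfLp : eLpNorm f 2 (volume : Measure ℝ) = ENNReal.ofReal (Real.sqrt B) := by
    rw [hf.eLpNorm_eq_integral_rpow_norm two_ne_zero ENNReal.ofNat_ne_top, htoReal]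
    congr 1
    rw [hB', Real.sqrt_eq_rpow]
    norm_num
  have hHolder : (∫ s, g s) ≤ Real.sqrt A * Real.sqrt B := by
    have hconj : Real.HolderConjugate 2 2 := Real.HolderConjugate.two_two
    have h2 : (ENNReal.ofReal 2) = (2 : ENNReal) := by norm_num
    have hU' : MemLp U (ENNReal.ofReal 2) (volume : Measure ℝ) := by rw [h2]; exact hUmem
    have hf' : MemLp (fun t => ‖f t‖) (ENNReal.ofReal 2) (volume : Measure ℝ) := by
      rw [h2]; exact hf.norm
    have hHo := integral_mul_norm_le_Lp_mul_Lq hconj hU' hf'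
    simp only [norm_norm] at hHo
    have hgl : (∫ s, g s) = ∫ a, ‖U a‖ * ‖f a‖ := by
      refine integral_congr_ae (Filter.Eventually.of_forall fun s => ?_)
      simp only [hgdef]
      rw [Real.norm_eq_abs, abs_of_nonneg (hUnn s)]
    rw [hgl]
    refine hHo.trans (le_of_eq ?_)
    rw [hA', hB', Real.sqrt_eq_rpow, Real.sqrt_eq_rpow]
  have hkey : C * Real.sqrt A ≤ (1 / 2 * ∫ t, |V t|) * Real.sqrt B := by
    rw [← hA]
    have h1 : (∫ s, g s) * Real.sqrt A ≤ Real.sqrt A * Real.sqrt B * Real.sqrt A :=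
      mul_le_mul_of_nonneg_right hHolder (Real.sqrt_nonneg A)
    have h2' : Real.sqrt A * Real.sqrt A = A := Real.mul_self_sqrt hAnn
    have h3 : (∫ s, g s) * Real.sqrt A ≤ A * Real.sqrt B := by nlinarith [Real.sqrt_nonneg B]
    rw [hCdef]
    nlinarith
  calc eLpNorm (opKV ε₀ V f) 2 volume
      ≤ eLpNorm (fun t => C * U t) 2 volume := eLpNorm_mono_real fun t => hopbound t
    _ = ‖C‖₊ * eLpNorm U 2 volume := by
        rw [show (fun t => C * U t) = C • U from funext fun t => by simp [smul_eq_mul]]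
        exact eLpNorm_const_smul C U 2 volume
    _ = ENNReal.ofReal C * ENNReal.ofReal (Real.sqrt A) := by
        rw [hULp, ← Real.enorm_eq_ofReal hCnn]; rfl
    _ = ENNReal.ofReal (C * Real.sqrt A) := (ENNReal.ofReal_mul hCnn).symm
    _ ≤ ENNReal.ofReal ((1 / 2 * ∫ t, |V t|) * Real.sqrt B) := ENNReal.ofReal_le_ofReal hkey
    _ = ENNReal.ofReal (1 / 2 * ∫ t, |V t|) * ENNReal.ofReal (Real.sqrt B) :=
        ENNReal.ofReal_mul (mul_nonneg (by norm_num) (integral_nonneg fun t => abs_nonneg _))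
    _ = ENNReal.ofReal (1 / 2 * ∫ t, |V t|) * eLpNorm f 2 volume := by rw [hfLp]

/-- For `V ∈ L^∞(ℝ)` supported in `[-ε₀, ε₀]` and every `f ∈ L²(ℝ)`: for a.e. `t` the
integrand defining `𝒦_V f(t)` is integrable, `𝒦_V f ∈ L²(ℝ)`, and
`‖𝒦_V f‖_{L²} ≤ (1/2) ‖V‖_{L¹} ‖f‖_{L²}`; thus `𝒦_V` is bounded on `L²(ℝ)` with operator
norm at most `(1/2) ‖V‖_{L¹}`. -/
theorem opKV_bounded (ε₀ : ℝ) (hε₀ : 0 < ε₀) (V : ℝ → ℝ)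
    (hV : MemLp V ⊤ (volume : Measure ℝ))
    (hsupp : Function.support V ⊆ Set.Icc (-ε₀) ε₀)
    (f : ℝ → ℂ) (hf : MemLp f 2 (volume : Measure ℝ)) :
    (∀ᵐ t ∂(volume : Measure ℝ), Integrable (fun s => kerKV ε₀ V t s * f s) volume) ∧
    MemLp (opKV ε₀ V f) 2 (volume : Measure ℝ) ∧
    eLpNorm (opKV ε₀ V f) 2 (volume : Measure ℝ) ≤
      ENNReal.ofReal ((1 / 2) * ∫ t, |V t|) * eLpNorm f 2 (volume : Measure ℝ) := by
  -- measurable representatives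
  set V' := hV.1.mk V with hV'def
  have hV'm : StronglyMeasurable V' := hV.1.stronglyMeasurable_mk
  have hVeq : V =ᵐ[volume] V' := hV.1.ae_eq_mk
  set f' := hf.1.mk f with hf'def
  have hf'm : StronglyMeasurable f' := hf.1.stronglyMeasurable_mk
  have hfeq : f =ᵐ[volume] f' := hf.1.ae_eq_mk
  -- V is integrable
  have hVzero : ∀ x, x ∉ Set.Icc (-ε₀) ε₀ → V x = 0 := by
    intro x hx
    by_contra h
    exact hx (hsupp (Function.mem_support.2 h))
  have hVint : Integrable V volume :=
    memLp_one_iff_integrable.1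
      (hV.mono_exponent_of_measure_support_ne_top hVzero measure_Icc_lt_top.ne le_top)
  have hV'int : Integrable V' volume := hVint.congr hVeq
  have hf' : MemLp f' 2 (volume : Measure ℝ) := hf.ae_eq hfeq
  -- quasi measure preserving scaling
  have qmp : Measure.QuasiMeasurePreserving (fun t : ℝ => ε₀ * t) volume volume := by
    refine ⟨measurable_const_mul ε₀, ?_⟩
    rw [Real.map_volume_mul_left hε₀.ne']
    intro s hs
    simp [Measure.smul_apply, hs]
  have hcomp : (fun t => V (ε₀ * t)) =ᵐ[volume] fun t => V' (ε₀ * t) :=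
    qmp.ae_eq_comp hVeq
  have hu_eq : uProfile ε₀ V =ᵐ[volume] uProfile ε₀ V' :=
    hcomp.mono fun t ht => by
      simp only [uProfile]; rw [show V (ε₀ * t) = V' (ε₀ * t) from ht]
  have hv_eq : vProfile ε₀ V =ᵐ[volume] vProfile ε₀ V' :=
    hcomp.mono fun t ht => by
      simp only [vProfile, uProfile]; rw [show V (ε₀ * t) = V' (ε₀ * t) from ht]
  have hVabs : (∫ t, |V t|) = ∫ t, |V' t| :=
    integral_congr_ae (hVeq.mono fun x hx => by simp only [hx])
  obtain ⟨haux1, haux2, haux3⟩ :=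
    opKV_bounded_aux ε₀ hε₀ V' hV'm.measurable hV'int f' hf'm hf'
  have hop_eq : opKV ε₀ V f =ᵐ[volume] opKV ε₀ V' f' := by
    filter_upwards [hu_eq] with t htu
    refine integral_congr_ae ?_
    filter_upwards [hv_eq, hfeq] with s hvs hfs
    rw [kerKV, kerKV, htu, hvs, hfs]
  refine ⟨?_, haux2.ae_eq hop_eq.symm, ?_⟩
  · filter_upwards [hu_eq] with t htu
    refine (haux1 t).congr ?_
    filter_upwards [hv_eq, hfeq] with s hvs hfs
    rw [kerKV, kerKV, htu, hvs, hfs]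
  · rw [eLpNorm_congr_ae hop_eq, hVabs, eLpNorm_congr_ae hfeq]
    exact haux3
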